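/- Let p be a prime, f ≥ 1, and let x_0, …, x_{f−1} be integers (indexed cyclically mod f) with |x_i| ≤ p for all i, with ∑_{i=0}^{f−1} p^{f−1−i} x_i ≡ 0 (mod p^f − 1), such that x_i = 0 for at least one i, and such that p ≥ 3 or not all x_i equal ±2. Then the set of indices i with x_i ≠ 0 decomposes as a disjoint union of cyclically-consecutive intervals (i, i+1, …, i+j) on each of which (x_i, x_{i+1}, …, x_{i+j}) = ±(−1, p−1, …, p−1, p) (with possibly zero occurrences of p−1). -/
import Mathlib


/-- The set of indices covered by a cyclically-consecutive string starting at `i`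
of length `j+1` in `ZMod f`. -/
def coverSet (f : ℕ) [NeZero f] (i : ZMod f) (j : ℕ) : Finset (ZMod f) :=
  (Finset.range (j + 1)).image (fun t : ℕ => (i + (t : ZMod f)))

/-- `(x_i, x_{i+1}, …, x_{i+j}) = ε·(−1, p−1, …, p−1, p)` with `ε ∈ {±1}`,
the middle entries `p−1` occurring `j−1 ≥ 0` times, and the covered indices distinct. -/
def IsPMString (p f : ℕ) [NeZero f] (x : ZMod f → ℤ) (i : ZMod f) (j : ℕ) (ε : ℤ) : Prop :=
  (ε = 1 ∨ ε = -1) ∧ 1 ≤ j ∧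
  x i = -ε ∧
  (∀ t : ℕ, 1 ≤ t → t < j → x (i + (t : ZMod f)) = ε * ((p : ℤ) - 1)) ∧
  x (i + (j : ZMod f)) = ε * (p : ℤ) ∧
  (coverSet f i j).card = j + 1

section Aux
variable (p f : ℕ) [NeZero f] (x : ZMod f → ℤ)

/-- cyclic partial sum starting at `i` -/
def Saux (i : ZMod f) : ℤ := ∑ t ∈ Finset.range f, (p:ℤ)^(f-1-t) * x (i + (t : ZMod f))

lemma Saux_rec (i : ZMod f) :
    (p:ℤ) * Saux p f x i = Saux p f x (i+1) + ((p:ℤ)^f - 1) * x i := by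
  obtain ⟨n, rfl⟩ : ∃ n, f = n + 1 :=
    ⟨f-1, (Nat.succ_pred_eq_of_pos (Nat.pos_of_ne_zero (NeZero.ne f))).symm⟩
  unfold Saux
  rw [Finset.mul_sum, Finset.sum_range_succ'
      (fun t => (p:ℤ) * ((p:ℤ)^(n+1-1-t) * x (i + (t : ZMod (n+1))))) n,
    Finset.sum_range_succ]
  have hsum : ∑ t ∈ Finset.range n,
        (p:ℤ) * ((p:ℤ)^(n+1-1-(t+1)) * x (i + ((t+1 : ℕ) : ZMod (n+1))))
      = ∑ t ∈ Finset.range n, (p:ℤ)^(n+1-1-t) * x (i + 1 + (t : ZMod (n+1))) := by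
    apply Finset.sum_congr rfl
    intro t ht
    have ht' : t < n := Finset.mem_range.mp ht
    have h1 : ((t+1 : ℕ) : ZMod (n+1)) = 1 + (t : ZMod (n+1)) := by push_cast; ring
    have h2 : (p:ℤ) * (p:ℤ)^(n+1-1-(t+1)) = (p:ℤ)^(n+1-1-t) := by
      rw [← pow_succ']
      congr 1
      omega
    rw [h1, ← add_assoc, ← mul_assoc, h2]
  rw [hsum]
  have e2 : i + 1 + ((n : ℕ) : ZMod (n+1)) = i := by
    have : ((n+1 : ℕ) : ZMod (n+1)) = 0 := ZMod.natCast_self (n+1)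
    rw [add_assoc]
    have : (1 : ZMod (n+1)) + (n : ZMod (n+1)) = 0 := by
      rw [← this]; push_cast; ring
    rw [this, add_zero]
  rw [e2]
  have e3 : ((0 : ℕ) : ZMod (n+1)) = 0 := by norm_cast
  rw [e3, add_zero]
  simp only [Nat.add_sub_cancel, Nat.sub_zero, Nat.sub_self, pow_zero]
  ring

lemma Saux_dvd
    (hcong : ((p : ℤ) ^ f - 1) ∣
      ∑ i : Fin f, (p : ℤ) ^ (f - 1 - i.val) * x ((i.val : ZMod f))) :
    ∀ i : ZMod f, ((p:ℤ)^f - 1) ∣ Saux p f x i := by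
  have h0 : ((p:ℤ)^f - 1) ∣ Saux p f x 0 := by
    have : Saux p f x 0 = ∑ i : Fin f, (p : ℤ) ^ (f - 1 - i.val) * x ((i.val : ZMod f)) := by
      rw [Fin.sum_univ_eq_sum_range (fun t => (p : ℤ) ^ (f - 1 - t) * x ((t : ZMod f)))]
      unfold Saux
      simp [zero_add]
    rw [this]; exact hcong
  have hn : ∀ n : ℕ, ((p:ℤ)^f - 1) ∣ Saux p f x (n : ZMod f) := by
    intro n
    induction n with
    | zero => simpa using h0
    | succ n ih =>
      have hrec := Saux_rec p f x (n : ZMod f)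
      have : Saux p f x ((n : ZMod f) + 1) =
          (p:ℤ) * Saux p f x (n : ZMod f) - ((p:ℤ)^f - 1) * x (n : ZMod f) := by linarith
      have h2 : (((n+1 : ℕ)) : ZMod f) = (n : ZMod f) + 1 := by push_cast; ring
      rw [h2, this]
      exact dvd_sub (ih.mul_left _) (Dvd.intro _ rfl)
  intro i
  have := hn i.val
  rwa [ZMod.natCast_rightInverse i] at this

lemma Saux_bound (hp : 1 ≤ p) (hx : ∀ i, |x i| ≤ (p : ℤ)) (i : ZMod f) :
    ((p:ℤ) - 1) * |Saux p f x i| ≤ (p:ℤ) * ((p:ℤ)^f - 1) := by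
  have hp' : (0:ℤ) ≤ (p:ℤ) := by positivity
  have h1 : |Saux p f x i| ≤ ∑ t ∈ Finset.range f, (p:ℤ)^(f-1-t) * p := by
    refine (Finset.abs_sum_le_sum_abs _ _).trans (Finset.sum_le_sum fun t _ => ?_)
    rw [abs_mul, abs_pow, abs_of_nonneg hp']
    exact mul_le_mul_of_nonneg_left (hx _) (by positivity)
  have h2 : ∑ t ∈ Finset.range f, ((p:ℤ)^(f-1-t) * p)
      = (∑ t ∈ Finset.range f, (p:ℤ)^t) * p := by
    rw [← Finset.sum_mul]
    congr 1
    exact Finset.sum_range_reflect (fun t => (p:ℤ)^t) f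
  have h3 : (∑ t ∈ Finset.range f, (p:ℤ)^t) * ((p:ℤ) - 1) = (p:ℤ)^f - 1 :=
    geom_sum_mul (p:ℤ) f
  have hG : (0:ℤ) ≤ ∑ t ∈ Finset.range f, (p:ℤ)^t :=
    Finset.sum_nonneg fun t _ => by positivity
  have hp1 : (0:ℤ) ≤ (p:ℤ) - 1 := by
    have h : (1:ℤ) ≤ (p:ℤ) := by exact_mod_cast hp
    linarith
  nlinarith [mul_le_mul_of_nonneg_left (h1.trans (le_of_eq h2)) hp1]

end Aux

theorem stmt15 (p f : ℕ) (hp : p.Prime) [NeZero f]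
    (x : ZMod f → ℤ) (hx : ∀ i, |x i| ≤ (p : ℤ))
    (hcong : ((p : ℤ) ^ f - 1) ∣
      ∑ i : Fin f, (p : ℤ) ^ (f - 1 - i.val) * x ((i.val : ZMod f)))
    (hzero : ∃ i, x i = 0)
    (hnot2 : 3 ≤ p ∨ ¬((∀ i, x i = 2) ∨ (∀ i, x i = -2))) :
    ∃ T : Finset (ZMod f × ℕ × ℤ),
      (∀ s ∈ T, IsPMString p f x s.1 s.2.1 s.2.2) ∧
      (∀ s ∈ T, ∀ s' ∈ T, s ≠ s' →
        Disjoint (coverSet f s.1 s.2.1) (coverSet f s'.1 s'.2.1)) ∧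
      (∀ i : ZMod f, x i = 0 ↔ ∀ s ∈ T, i ∉ coverSet f s.1 s.2.1) := by
  classical
  have hp2 : (2:ℤ) ≤ (p:ℤ) := by exact_mod_cast hp.two_le
  have hf1 : 1 ≤ f := Nat.pos_of_ne_zero (NeZero.ne f)
  have hM1 : (1:ℤ) ≤ (p:ℤ)^f - 1 := by
    have h2 : (2:ℤ) ≤ (p:ℤ)^f := by
      calc (2:ℤ) = 2^1 := by norm_num
      _ ≤ 2^f := by exact pow_le_pow_right₀ (by norm_num) hf1
      _ ≤ (p:ℤ)^f := by exact pow_le_pow_left₀ (by norm_num) hp2 f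
    linarith
  have hdvd := Saux_dvd p f x hcong
  have hSc : ∀ i : ZMod f, ∃ k, Saux p f x i = ((p:ℤ)^f - 1) * k := hdvd
  choose c hc using hSc
  -- the carry recursion
  have hrec : ∀ i, x i = (p:ℤ) * c i - c (i + 1) := by
    intro i
    have h := Saux_rec p f x i
    rw [hc, hc] at h
    have h2 : ((p:ℤ)^f - 1) * ((p:ℤ) * c i) = ((p:ℤ)^f - 1) * (c (i+1) + x i) := by
      linear_combination h
    have h3 := mul_left_cancel₀ (by linarith : ((p:ℤ)^f - 1) ≠ 0) h2
    linarith
  -- bound on carries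
  have hcb : ∀ i, ((p:ℤ) - 1) * |c i| ≤ (p:ℤ) := by
    intro i
    have hb := Saux_bound p f x hp.one_le hx i
    rw [hc i, abs_mul, abs_of_pos (by linarith : (0:ℤ) < (p:ℤ)^f - 1)] at hb
    have h2 : (((p:ℤ) - 1) * |c i|) * ((p:ℤ)^f - 1) ≤ (p:ℤ) * ((p:ℤ)^f - 1) := by
      nlinarith
    exact le_of_mul_le_mul_right h2 (by linarith)
  have hc2 : ∀ i, |c i| ≤ 2 := by
    intro i
    have h := hcb i
    nlinarith [abs_nonneg (c i)]
  -- carries are in {-1,0,1}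
  have hc1 : ∀ i, |c i| ≤ 1 := by
    rcases hnot2 with h3 | hnot
    · intro i
      have h := hcb i
      have hP3 : (3:ℤ) ≤ (p:ℤ) := by exact_mod_cast h3
      nlinarith [abs_nonneg (c i)]
    · by_contra hcon
      push_neg at hcon
      obtain ⟨i₁, hi₁⟩ := hcon
      apply hnot
      have h2 : c i₁ = 2 ∨ c i₁ = -2 := by
        have ha := abs_le.mp (hc2 i₁)
        have hb := lt_abs.mp hi₁
        omega
      have hPeq : (p:ℤ) = 2 := by
        by_contra hne
        have hP3 : (3:ℤ) ≤ (p:ℤ) := by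
          have : (2:ℤ) ≠ (p:ℤ) := fun h => hne h.symm
          omega
        have h := hcb i₁
        have := abs_le.mp (hc2 i₁)
        rcases h2 with h2 | h2 <;> rw [h2] at h <;> simp at h <;> nlinarith
      have prop : ∀ ε : ℤ, (ε = 1 ∨ ε = -1) → c i₁ = 2 * ε →
          ∀ n : ℕ, c (i₁ + (n : ZMod f)) = 2 * ε := by
        intro ε hε hstart n
        induction n with
        | zero => simpa using hstart
        | succ n ih =>
          have hr := hrec (i₁ + (n : ZMod f))
          have hxb := abs_le.mp (hx (i₁ + (n : ZMod f)))
          have hcb2 := abs_le.mp (hc2 (i₁ + (n : ZMod f) + 1))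
          rw [ih, hPeq] at hr
          have hnext : c (i₁ + (n : ZMod f) + 1) = 2 * ε := by
            rcases hε with h | h <;> subst h <;> omega
          have hcast : (((n+1 : ℕ)) : ZMod f) = (n : ZMod f) + 1 := by push_cast; ring
          rw [hcast, ← add_assoc]
          exact hnext
      have hcall : ∀ ε : ℤ, (ε = 1 ∨ ε = -1) → c i₁ = 2 * ε → ∀ j, x j = 2 * ε := by
        intro ε hε hstart j
        have hcj : ∀ j : ZMod f, c j = 2 * ε := by
          intro j
          have := prop ε hε hstart ((j - i₁).val)
          rwa [ZMod.natCast_rightInverse (j - i₁),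
            show i₁ + (j - i₁) = j from by ring] at this
        have hr := hrec j
        rw [hcj j, hcj (j+1), hPeq] at hr
        linarith
      rcases h2 with h2 | h2
      · exact Or.inl fun j => by have := hcall 1 (Or.inl rfl) (by linarith) j; linarith
      · exact Or.inr fun j => by have := hcall (-1) (Or.inr rfl) (by linarith) j; linarith
  have htri : ∀ i, c i = -1 ∨ c i = 0 ∨ c i = 1 := fun i => by
    have := abs_le.mp (hc1 i); omega
  -- sign propagation
  have hposneg : ∀ i, c i = 1 → c (i+1) = 0 ∨ c (i+1) = 1 := by
    intro i h
    have hr := hrec i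
    have hxb := abs_le.mp (hx i)
    rcases htri (i+1) with h' | h' | h'
    · exfalso; rw [h, h'] at hr; omega
    · exact Or.inl h'
    · exact Or.inr h'
  have hnegneg : ∀ i, c i = -1 → c (i+1) = 0 ∨ c (i+1) = -1 := by
    intro i h
    have hr := hrec i
    have hxb := abs_le.mp (hx i)
    rcases htri (i+1) with h' | h' | h'
    · exact Or.inr h'
    · exact Or.inl h'
    · exfalso; rw [h, h'] at hr; omega
  -- characterization of zeros
  have hx0 : ∀ i, x i = 0 ↔ (c i = 0 ∧ c (i+1) = 0) := by
    intro i
    constructor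
    · intro h
      have hr := hrec i
      rw [h] at hr
      rcases htri i with h1 | h1 | h1 <;> rcases htri (i+1) with h2 | h2 | h2 <;>
        rw [h1, h2] at hr <;> first
          | exact ⟨h1, h2⟩
          | omega
    · rintro ⟨h1, h2⟩
      rw [hrec i, h1, h2]; ring
  obtain ⟨i₀, hi₀⟩ := hzero
  have hci₀ : c i₀ = 0 := ((hx0 i₀).mp hi₀).1
  -- existence of zeros ahead
  have hex : ∀ u : ZMod f, ∃ k : ℕ, 1 ≤ k ∧ c (u + (k : ZMod f)) = 0 := by
    intro u
    by_cases h : u = i₀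
    · refine ⟨f, hf1, ?_⟩
      rw [ZMod.natCast_self, add_zero, h]; exact hci₀
    · refine ⟨(i₀ - u).val, ?_, ?_⟩
      · have hne : i₀ - u ≠ 0 := sub_ne_zero.mpr (Ne.symm h)
        exact Nat.one_le_iff_ne_zero.mpr fun hh => hne ((ZMod.val_eq_zero _).mp hh)
      · rw [ZMod.natCast_rightInverse (i₀ - u), show u + (i₀ - u) = i₀ from by ring]
        exact hci₀
  have hmin : ∀ u : ZMod f, ∃ k : ℕ, (1 ≤ k ∧ c (u + (k : ZMod f)) = 0) ∧
      ∀ k', 1 ≤ k' → k' < k → c (u + (k' : ZMod f)) ≠ 0 := by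
    intro u
    exact ⟨Nat.find (hex u), Nat.find_spec (hex u),
      fun k' h1 h2 hc0 => Nat.find_min (hex u) h2 ⟨h1, hc0⟩⟩
  choose m hmA hmmin using hmin
  have hm1 : ∀ u, 1 ≤ m u := fun u => (hmA u).1
  have hm0 : ∀ u, c (u + ((m u : ℕ) : ZMod f)) = 0 := fun u => (hmA u).2
  -- existence of zeros behind
  have hexb : ∀ u : ZMod f, ∃ k : ℕ, c (u - (k : ZMod f)) = 0 := fun u =>
    ⟨(u - i₀).val, by
      rw [ZMod.natCast_rightInverse (u - i₀), show u - (u - i₀) = i₀ from by ring]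
      exact hci₀⟩
  have hminb : ∀ u : ZMod f, ∃ k : ℕ, c (u - (k : ZMod f)) = 0 ∧
      ∀ k', k' < k → c (u - (k' : ZMod f)) ≠ 0 := fun u =>
    ⟨Nat.find (hexb u), Nat.find_spec (hexb u), fun k' h2 => Nat.find_min (hexb u) h2⟩
  choose r hr0 hrmin using hminb
  -- m is at most f on zeros of c
  have hmf : ∀ u, c u = 0 → m u ≤ f := by
    intro u hu
    by_contra hgt
    push_neg at hgt
    exact hmmin u f hf1 hgt (by rw [ZMod.natCast_self, add_zero]; exact hu)
  -- runs are constant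
  have hrun : ∀ u : ZMod f, ∀ t : ℕ, 1 ≤ t → t < m u → c (u + (t : ZMod f)) = c (u + 1) := by
    intro u t
    induction t with
    | zero => intro h; omega
    | succ t ih =>
      intro _ h2
      by_cases ht : t = 0
      · subst ht; norm_num
      · have ht1 : 1 ≤ t := Nat.one_le_iff_ne_zero.mpr ht
        have hct := ih ht1 (by omega)
        have hc1ne : c (u + 1) ≠ 0 := by
          have := hmmin u 1 le_rfl (by omega)
          simpa using this
        have hcast : (((t+1 : ℕ)) : ZMod f) = (t : ZMod f) + 1 := by push_cast; ring
        have hnz : c (u + (t : ZMod f) + 1) ≠ 0 := by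
          have := hmmin u (t+1) (by omega) h2
          rwa [hcast, ← add_assoc] at this
        rw [hcast, ← add_assoc]
        rcases htri (u + (t : ZMod f)) with h | h | h
        · rcases hnegneg _ h with h' | h'
          · exact absurd h' hnz
          · rw [h', hct] at *; omega
        · exfalso; exact hmmin u t ht1 (by omega) h
        · rcases hposneg _ h with h' | h'
          · exact absurd h' hnz
          · rw [h', hct] at *; omega
  -- the set of strings
  set T : Finset (ZMod f × ℕ × ℤ) :=
    (Finset.univ.filter (fun i : ZMod f => c i = 0 ∧ c (i+1) ≠ 0)).image
      (fun i => (i, m i - 1, c (i+1))) with hTdef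
  have hmemT : ∀ s, s ∈ T ↔ ∃ i : ZMod f, (c i = 0 ∧ c (i+1) ≠ 0) ∧ (i, m i - 1, c (i+1)) = s := by
    intro s
    simp [hTdef, Finset.mem_image, Finset.mem_filter]
  have hm2 : ∀ i : ZMod f, c i = 0 → c (i+1) ≠ 0 → 2 ≤ m i := by
    intro i h0 h1
    by_contra hlt
    push_neg at hlt
    have hmi : m i = 1 := by have := hm1 i; omega
    have h := hm0 i
    rw [hmi] at h
    simp only [Nat.cast_one] at h
    exact h1 h
  refine ⟨T, ?_, ?_, ?_⟩
  · -- each element of T is a string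
    intro s hs
    obtain ⟨i, ⟨h0, h1⟩, rfl⟩ := (hmemT s).mp hs
    have hm2i := hm2 i h0 h1
    have hmle := hmf i h0
    have hrunε : ∀ t : ℕ, 1 ≤ t → t < m i → c (i + (t:ZMod f)) = c (i+1) := hrun i
    show IsPMString p f x i (m i - 1) (c (i+1))
    unfold IsPMString
    refine ⟨?_, ?_, ?_, ?_, ?_, ?_⟩
    · rcases htri (i+1) with h | h | h
      · exact Or.inr h
      · exact absurd h h1
      · exact Or.inl h
    · omega
    · show x i = -(c (i+1))
      rw [hrec i, h0]; ring
    · intro t ht1 ht2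
      show x (i + (t:ZMod f)) = c (i+1) * ((p:ℤ) - 1)
      have e1 : c (i + (t:ZMod f)) = c (i+1) := hrunε t ht1 (by omega)
      have e2 : c (i + (t:ZMod f) + 1) = c (i+1) := by
        have h := hrunε (t+1) (by omega) (by omega)
        rwa [show (((t+1:ℕ)):ZMod f) = (t:ZMod f)+1 from by push_cast; ring,
          ← add_assoc] at h
      rw [hrec (i + (t:ZMod f)), e1, e2]; ring
    · show x (i + ((m i - 1 : ℕ) : ZMod f)) = c (i+1) * (p:ℤ)
      have e1 : c (i + ((m i - 1:ℕ):ZMod f)) = c (i+1) := hrunε _ (by omega) (by omega)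
      have e2 : c (i + ((m i - 1:ℕ):ZMod f) + 1) = 0 := by
        have h := hm0 i
        rwa [show ((m i :ℕ):ZMod f) = ((m i - 1:ℕ):ZMod f) + 1 from by
          rw [show (m i :ℕ) = (m i - 1) + 1 from by omega]; push_cast; ring,
          ← add_assoc] at h
      rw [hrec _, e1, e2]; ring
    · show (coverSet f i (m i - 1)).card = (m i - 1) + 1
      unfold coverSet
      rw [Finset.card_image_of_injOn, Finset.card_range]
      intro a ha b hb hab
      simp only [Finset.coe_range, Set.mem_Iio] at ha hb
      have ha' : a < f := by omega
      have hb' : b < f := by omega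
      have h := congrArg ZMod.val (add_left_cancel hab)
      rwa [ZMod.val_cast_of_lt ha', ZMod.val_cast_of_lt hb'] at h
  · -- disjointness
    have key : ∀ (a a' : ZMod f) (t t' : ℕ), c a = 0 → t < m a → t' < m a' → t ≤ t' →
        a + (t : ZMod f) = a' + (t' : ZMod f) → a = a' := by
      intro a a' t t' ha hta hta' hle heq
      have hcast : ((t' - t : ℕ) : ZMod f) = (t' : ZMod f) - (t : ZMod f) := by
        push_cast [Nat.cast_sub hle]; ring
      have hs2 : a' + ((t' - t : ℕ) : ZMod f) = a := by
        rw [hcast]; linear_combination -heq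
      rcases Nat.eq_zero_or_pos (t' - t) with h0 | h0
      · rw [h0] at hs2; simpa using hs2.symm
      · exact absurd (by rw [hs2]; exact ha) (hmmin a' (t' - t) h0 (by omega))
    intro s hs s' hs' hne
    obtain ⟨i, ⟨h0, h1⟩, rfl⟩ := (hmemT s).mp hs
    obtain ⟨i', ⟨h0', h1'⟩, rfl⟩ := (hmemT s').mp hs'
    have hii : i ≠ i' := fun h => hne (by rw [h])
    rw [Finset.disjoint_left]
    intro u hu hu'
    simp only [coverSet, Finset.mem_image, Finset.mem_range] at hu hu'
    obtain ⟨t, htlt, htu⟩ := hu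
    obtain ⟨t', htlt', htu'⟩ := hu'
    have hmi := hm1 i
    have hmi' := hm1 i'
    have htm : t < m i := by omega
    have htm' : t' < m i' := by omega
    have heq : i + (t:ZMod f) = i' + (t':ZMod f) := by rw [htu, htu']
    rcases le_total t t' with h | h
    · exact hii (key i i' t t' h0 htm htm' h heq)
    · exact hii ((key i' i t' t h0' htm' htm h heq.symm).symm)
  · -- zeros are exactly the uncovered indices
    intro u
    constructor
    · intro hu s hs hmem
      obtain ⟨i, ⟨h0, h1⟩, rfl⟩ := (hmemT s).mp hs
      obtain ⟨hcu, hcu1⟩ := (hx0 u).mp hu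
      simp only [coverSet, Finset.mem_image, Finset.mem_range] at hmem
      obtain ⟨t, htlt, htu⟩ := hmem
      have hmi := hm1 i
      rcases Nat.eq_zero_or_pos t with h0' | h0'
      · subst h0'
        simp only [Nat.cast_zero, add_zero] at htu
        rw [← htu] at hcu1
        exact h1 hcu1
      · exact hmmin i t h0' (by omega) (by rw [htu]; exact hcu)
    · intro hall
      by_contra hxu
      have hne : ¬(c u = 0 ∧ c (u+1) = 0) := fun h => hxu ((hx0 u).mpr h)
      by_cases hcu : c u = 0
      · have hcu1 : c (u+1) ≠ 0 := fun h => hne ⟨hcu, h⟩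
        refine hall (u, m u - 1, c (u+1)) ((hmemT _).mpr ⟨u, ⟨hcu, hcu1⟩, rfl⟩) ?_
        simp only [coverSet, Finset.mem_image, Finset.mem_range]
        exact ⟨0, by omega, by simp⟩
      · have hru1 : 1 ≤ r u := by
          rcases Nat.eq_zero_or_pos (r u) with h | h
          · exfalso
            have h2 := hr0 u
            rw [h] at h2
            simp at h2
            exact hcu h2
          · exact h
        have hci : c (u - ((r u : ℕ) : ZMod f)) = 0 := hr0 u
        have hci1 : c (u - ((r u : ℕ) : ZMod f) + 1) ≠ 0 := by
          have hcast : u - ((r u : ℕ) : ZMod f) + 1 = u - ((r u - 1 : ℕ) : ZMod f) := by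
            rw [Nat.cast_sub hru1]; push_cast; ring
          rw [hcast]
          exact hrmin u (r u - 1) (by omega)
        have hrm : r u < m (u - ((r u : ℕ) : ZMod f)) := by
          by_contra hge
          push_neg at hge
          have hmi1 := hm1 (u - ((r u : ℕ) : ZMod f))
          have h2 := hm0 (u - ((r u : ℕ) : ZMod f))
          have hcast2 : u - ((r u : ℕ) : ZMod f) + ((m (u - ((r u : ℕ) : ZMod f)) : ℕ) : ZMod f)
              = u - ((r u - m (u - ((r u : ℕ) : ZMod f)) : ℕ) : ZMod f) := by
            rw [Nat.cast_sub hge]; ring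
          rw [hcast2] at h2
          exact hrmin u _ (by omega) h2
        refine hall (u - ((r u : ℕ) : ZMod f), m (u - ((r u : ℕ) : ZMod f)) - 1,
            c (u - ((r u : ℕ) : ZMod f) + 1))
          ((hmemT _).mpr ⟨u - ((r u : ℕ) : ZMod f), ⟨hci, hci1⟩, rfl⟩) ?_
        simp only [coverSet, Finset.mem_image, Finset.mem_range]
        have hmi1 := hm1 (u - ((r u : ℕ) : ZMod f))
        exact ⟨r u, by omega, by ring⟩
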